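/- Let α, β ≥ 0 be integers, γ = max(α, β), and c, T, I ≥ 0. Let p, q, x, y : ℕ×ℕ → ℝ be double sequences with |p_i^0 − x_i^0| ≤ I and |q_0^j − y_0^j| ≤ I for all i, j, satisfying for all i, j ≥ 0: |p_i^{j+1} − x_i^{j+1}| ≤ c·max(|q_i^j − y_i^j|, |p_i^j − x_i^j|, …, |p_{i+α}^j − x_{i+α}^j|) + T and |q_{i+1}^j − y_{i+1}^j| ≤ c·max(|q_i^j − y_i^j|, |p_i^j − x_i^j|, …, |p_{i+β}^j − x_{i+β}^j|) + T. Then for all i, j ≥ 0: |p_i^{j+1} − x_i^{j+1}| ≤ P_{i+j(γ+1)}(c)·T + c̃^{i+1+j(γ+1)}·I and |q_{i+1}^j − y_{i+1}^j| ≤ P_{i+j(γ+1)}(c)·T + c̃^{i+1+j(γ+1)}·I. -/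

import Mathlib

private def FF (c T I : ℝ) (n : ℕ) : ℝ :=
  (∑ k ∈ Finset.range n, c ^ k) * T + (max c 1) ^ n * I

private lemma FF_mono (c T I : ℝ) (hc : 0 ≤ c) (hT : 0 ≤ T) (hI : 0 ≤ I)
    {m n : ℕ} (h : m ≤ n) : FF c T I m ≤ FF c T I n := by
  unfold FF
  apply add_le_add
  · apply mul_le_mul_of_nonneg_right _ hT
    exact Finset.sum_le_sum_of_subset_of_nonneg (Finset.range_subset_range.mpr h)
      (fun _ _ _ => pow_nonneg hc _)
  · exact mul_le_mul_of_nonneg_right (pow_le_pow_right₀ (le_max_right c 1) h) hI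

private lemma I_le_FF (c T I : ℝ) (hc : 0 ≤ c) (hT : 0 ≤ T) (hI : 0 ≤ I)
    (n : ℕ) : I ≤ FF c T I n := by
  unfold FF
  have h1 : (1:ℝ) ≤ (max c 1) ^ n := one_le_pow₀ (le_max_right c 1)
  have h2 : 0 ≤ (∑ k ∈ Finset.range n, c ^ k) * T :=
    mul_nonneg (Finset.sum_nonneg fun _ _ => pow_nonneg hc _) hT
  nlinarith

private lemma FF_step (c T I : ℝ) (hc : 0 ≤ c) (hT : 0 ≤ T) (hI : 0 ≤ I)
    (n : ℕ) : c * FF c T I n + T ≤ FF c T I (n + 1) := by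
  unfold FF
  rw [geom_sum_succ]
  have h1 : c * (max c 1) ^ n ≤ (max c 1) ^ (n + 1) := by
    rw [pow_succ']
    exact mul_le_mul_of_nonneg_right (le_max_left c 1)
      (pow_nonneg (le_trans hc (le_max_left c 1)) n)
  nlinarith

/-- general estimate for double sequences with lookahead `α`, `β`,
`γ = max α β`, `P_n(c) = ∑_{k=0}^n c^k`, `c̃ = max c 1`. -/
theorem statement6 (α β : ℕ) (c T I : ℝ) (hc : 0 ≤ c) (hT : 0 ≤ T) (hI : 0 ≤ I)
    (p q x y : ℕ → ℕ → ℝ)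
    (hp0 : ∀ i : ℕ, |p i 0 - x i 0| ≤ I) (hq0 : ∀ j : ℕ, |q 0 j - y 0 j| ≤ I)
    (hp : ∀ i j : ℕ, |p i (j + 1) - x i (j + 1)|
        ≤ c * max (|q i j - y i j|)
            ((Finset.range (α + 1)).sup' (Finset.nonempty_range_iff.mpr (Nat.succ_ne_zero α))
              (fun k => |p (i + k) j - x (i + k) j|)) + T)
    (hq : ∀ i j : ℕ, |q (i + 1) j - y (i + 1) j|
        ≤ c * max (|q i j - y i j|)
            ((Finset.range (β + 1)).sup' (Finset.nonempty_range_iff.mpr (Nat.succ_ne_zero β))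
              (fun k => |p (i + k) j - x (i + k) j|)) + T) :
    ∀ i j : ℕ,
      |p i (j + 1) - x i (j + 1)|
          ≤ (∑ k ∈ Finset.range (i + j * (max α β + 1) + 1), c ^ k) * T
            + (max c 1) ^ (i + 1 + j * (max α β + 1)) * I ∧
      |q (i + 1) j - y (i + 1) j|
          ≤ (∑ k ∈ Finset.range (i + j * (max α β + 1) + 1), c ^ k) * T
            + (max c 1) ^ (i + 1 + j * (max α β + 1)) * I := by
  have hmono := fun {m n : ℕ} (h : m ≤ n) => FF_mono c T I hc hT hI h
  have hstep := FF_step c T I hc hT hI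
  have hIle := I_le_FF c T I hc hT hI
  have key : ∀ j : ℕ,
      (∀ i : ℕ, |p i j - x i j| ≤ FF c T I (i + j * (max α β + 1) - max α β)) ∧
      (∀ i : ℕ, |q i j - y i j| ≤ FF c T I (i + j * (max α β + 1))) := by
    intro j
    induction j with
    | zero =>
      have hP : ∀ i : ℕ, |p i 0 - x i 0| ≤ FF c T I (i + 0 * (max α β + 1) - max α β) :=
        fun i => (hp0 i).trans (hIle _)
      refine ⟨hP, ?_⟩
      intro i
      induction i with
      | zero => exact (hq0 0).trans (hIle _)
      | succ i ihq =>
        have hidx : i + 1 + 0 * (max α β + 1) = i + 0 * (max α β + 1) + 1 := by omega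
        rw [hidx]
        refine le_trans (hq i 0) (le_trans
          (add_le_add_left (mul_le_mul_of_nonneg_left ?_ hc) T) (hstep _))
        apply max_le ihq
        apply Finset.sup'_le
        intro _ _
        exact (hp0 _).trans (hIle _)
    | succ j ih =>
      obtain ⟨hPj, hQj⟩ := ih
      have hmul : (j + 1) * (max α β + 1) = j * (max α β + 1) + (max α β + 1) := by ring
      have hP : ∀ i : ℕ,
          |p i (j + 1) - x i (j + 1)| ≤ FF c T I (i + (j + 1) * (max α β + 1) - max α β) := by
        intro i
        have hidx : i + (j + 1) * (max α β + 1) - max α β = i + j * (max α β + 1) + 1 := by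
          omega
        rw [hidx]
        refine le_trans (hp i j) (le_trans
          (add_le_add_left (mul_le_mul_of_nonneg_left ?_ hc) T) (hstep _))
        apply max_le (hQj i)
        apply Finset.sup'_le
        intro k hk
        have hk' : k ≤ max α β := le_trans (Nat.lt_succ_iff.mp (Finset.mem_range.mp hk))
          (le_max_left α β)
        refine (hPj (i + k)).trans (hmono ?_)
        omega
      refine ⟨hP, ?_⟩
      intro i
      induction i with
      | zero => exact (hq0 (j + 1)).trans (hIle _)
      | succ i ihq =>
        have hidx : i + 1 + (j + 1) * (max α β + 1) = i + (j + 1) * (max α β + 1) + 1 := by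
          omega
        rw [hidx]
        refine le_trans (hq i (j + 1)) (le_trans
          (add_le_add_left (mul_le_mul_of_nonneg_left ?_ hc) T) (hstep _))
        apply max_le ihq
        apply Finset.sup'_le
        intro k hk
        have hk' : k ≤ max α β := le_trans (Nat.lt_succ_iff.mp (Finset.mem_range.mp hk))
          (le_max_right α β)
        refine (hP (i + k)).trans (hmono ?_)
        omega
  intro i j
  have hmul : (j + 1) * (max α β + 1) = j * (max α β + 1) + (max α β + 1) := by ring
  constructor
  · have h1 := (key (j + 1)).1 i
    have e1 : i + (j + 1) * (max α β + 1) - max α β = i + j * (max α β + 1) + 1 := by omega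
    rw [e1] at h1
    unfold FF at h1
    have e2 : i + 1 + j * (max α β + 1) = i + j * (max α β + 1) + 1 := by omega
    rw [e2]
    exact h1
  · have h1 := (key j).2 (i + 1)
    unfold FF at h1
    have e2 : i + 1 + j * (max α β + 1) = i + 1 + j * (max α β + 1) := rfl
    have e3 : i + j * (max α β + 1) + 1 = i + 1 + j * (max α β + 1) := by omega
    rw [e3]
    exact h1
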